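/- For natural numbers k, j with j ≤ k and real x with |x| < 1: ∑_{l=0}^{∞} ((l+2)_j·(2)_l/((l+k+2)_j·l!))·x^l = ((j+1)!·(k+1)!/(j+k+1)!)·₂F₁(k+2, j+2; k+j+2; x), and moreover lim_{x→1⁻} (1−x)²·₂F₁(k+2, j+2; k+j+2; x) = (j+k+1)!/((j+1)!·(k+1)!). -/

import Mathlib

open Finset Filter
open Topology

/-- The rising factorial `(a)_n` for a real `a`. -/
noncomputable def rf (a : ℝ) (n : ℕ) : ℝ := ∏ j ∈ Finset.range n, (a + j)

/-- `₂F₁(a,b;c;x)` as a real power series (sum of the hypergeometric series). -/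
noncomputable def F21 (a b c x : ℝ) : ℝ :=
  ∑' i : ℕ, rf a i * rf b i / (rf c i * i.factorial) * x ^ i

lemma rf_succ (a : ℝ) (n : ℕ) : rf a (n+1) = rf a n * (a + n) := by
  simp [rf, Finset.prod_range_succ]

lemma rf_pos {a : ℝ} (ha : 0 < a) (n : ℕ) : 0 < rf a n := by
  apply Finset.prod_pos
  intro i _
  have : (0:ℝ) ≤ i := by positivity
  linarith

lemma rf_fact (n m : ℕ) : rf ((n:ℝ)+1) m * (n.factorial : ℝ) = ((n+m).factorial : ℝ) := by
  induction m with
  | zero => simp [rf]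
  | succ m ih =>
    rw [rf_succ, mul_right_comm, ih]
    have h : n + (m+1) = (n+m) + 1 := by omega
    rw [h, Nat.factorial_succ]
    push_cast
    ring

lemma rf_fact' (n m : ℕ) : rf ((n:ℝ)+1) m = ((n+m).factorial : ℝ) / (n.factorial : ℝ) := by
  rw [eq_div_iff (by exact_mod_cast n.factorial_ne_zero)]
  exact rf_fact n m

lemma rf_two (l : ℕ) : rf 2 l = ((l+1).factorial : ℝ) := by
  have h := rf_fact' 1 l
  have h2 : 1 + l = l + 1 := by omega
  rw [h2] at h
  norm_num at h
  convert h using 2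

lemma rf_e1 (l j : ℕ) : rf ((l:ℝ)+2) j = (((j+l+1).factorial : ℝ)) / ((l+1).factorial : ℝ) := by
  have h := rf_fact' (l+1) j
  have h2 : l + 1 + j = j + l + 1 := by omega
  rw [h2] at h
  push_cast at h
  convert h using 2
  ring

lemma rf_e3 (l j k : ℕ) : rf ((l:ℝ)+(k:ℝ)+2) j
    = (((j+k+l+1).factorial : ℝ)) / ((k+l+1).factorial : ℝ) := by
  have h := rf_fact' (k+l+1) j
  have h2 : k + l + 1 + j = j + k + l + 1 := by omega
  rw [h2] at h
  push_cast at h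
  convert h using 2
  ring

lemma rf_e6 (l j k : ℕ) : rf ((k:ℝ)+(j:ℝ)+2) l
    = (((j+k+l+1).factorial : ℝ)) / ((j+k+1).factorial : ℝ) := by
  have h := rf_fact' (j+k+1) l
  have h2 : j + k + 1 + l = j + k + l + 1 := by omega
  rw [h2] at h
  push_cast at h
  convert h using 2
  ring

lemma rf_e4 (k l : ℕ) : rf ((k:ℝ)+2) l = (((k+l+1).factorial : ℝ)) / ((k+1).factorial : ℝ) := by
  have h := rf_fact' (k+1) l
  have h2 : k + 1 + l = k + l + 1 := by omega
  rw [h2] at h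
  push_cast at h
  convert h using 2
  ring

lemma fact_nz (m : ℕ) : ((m.factorial : ℝ)) ≠ 0 := Nat.cast_ne_zero.2 m.factorial_ne_zero

lemma key_id (k j l : ℕ) :
    rf ((k:ℝ)+2) l * rf ((j:ℝ)+2) l / (rf ((k:ℝ)+(j:ℝ)+2) l * l.factorial)
      = (((j+k+1).factorial : ℝ) / (((j+1).factorial : ℝ) * ((k+1).factorial : ℝ)))
        * (rf ((l:ℝ)+2) j * rf 2 l / (rf ((l:ℝ)+(k:ℝ)+2) j * l.factorial)) := by
  have e5 : rf ((j:ℝ)+2) l = (((j+l+1).factorial : ℝ)) / ((j+1).factorial : ℝ) := by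
    have h := rf_e4 j l
    rw [show j + l + 1 = j + l + 1 from rfl]
    exact h
  rw [rf_e4, e5, rf_e6, rf_e1, rf_two, rf_e3]
  have n1 := fact_nz (j+1); have n2 := fact_nz (k+1); have n3 := fact_nz (j+k+1)
  have n4 := fact_nz (l+1); have n5 := fact_nz l; have n6 := fact_nz (j+k+l+1)
  have n7 := fact_nz (k+l+1); have n8 := fact_nz (j+l+1)
  field_simp

lemma termb_eq (k j l : ℕ) :
    rf ((l:ℝ)+2) j * rf 2 l / (rf ((l:ℝ)+(k:ℝ)+2) j * l.factorial)
      = ((l:ℝ)+1) * (rf ((l:ℝ)+2) j / rf ((l:ℝ)+(k:ℝ)+2) j) := by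
  rw [rf_two]
  have hf : ((l+1).factorial : ℝ) = ((l:ℝ)+1) * l.factorial := by
    rw [Nat.factorial_succ]; push_cast; ring
  rw [hf]
  have h1 : rf ((l:ℝ)+(k:ℝ)+2) j ≠ 0 := (rf_pos (by positivity) j).ne'
  have h2 := fact_nz l
  field_simp

lemma hasSum_aux {x : ℝ} (h0 : 0 ≤ x) (h1 : x < 1) :
    HasSum (fun n : ℕ => ((n:ℝ)+1) * x ^ n) (((1-x)^2)⁻¹) := by
  have hx : ‖x‖ < 1 := by rw [Real.norm_eq_abs, abs_of_nonneg h0]; exact h1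
  have A := hasSum_coe_mul_geometric_of_norm_lt_one hx
  have B := hasSum_geometric_of_norm_lt_one hx
  have C := A.add B
  have hne : (1:ℝ) - x ≠ 0 := by intro h; nlinarith
  have hval : x / (1-x)^2 + (1-x)⁻¹ = ((1-x)^2)⁻¹ := by field_simp; ring
  rw [← hval]
  have e : (fun n : ℕ => ((n:ℝ)+1) * x ^ n) = fun n : ℕ => (n:ℝ) * x ^ n + x ^ n := by
    funext n; ring
  rw [e]
  exact C

lemma abel_aux (R : ℕ → ℝ) (h0 : ∀ n, 0 ≤ R n) (h1 : ∀ n, R n ≤ 1)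
    (hlim : Tendsto R atTop (𝓝 1)) :
    Tendsto (fun x : ℝ => (1-x)^2 * ∑' n : ℕ, ((n:ℝ)+1) * R n * x ^ n)
      (nhdsWithin 1 (Set.Iio 1)) (𝓝 1) := by
  rw [Metric.tendsto_nhdsWithin_nhds]
  intro ε hε
  obtain ⟨N, hN⟩ := (Metric.tendsto_atTop.1 hlim) (ε/4) (by positivity)
  set S : ℝ := ∑ n ∈ Finset.range N, ((n:ℝ)+1) with hS
  have hSpos : 0 ≤ S := Finset.sum_nonneg fun n _ => by positivity
  have hδ : 0 < min 1 (Real.sqrt (ε / (2*(S+1)))) := by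
    apply lt_min one_pos
    apply Real.sqrt_pos.2
    positivity
  refine ⟨min 1 (Real.sqrt (ε / (2*(S+1)))), hδ, ?_⟩
  intro x hx hd
  have hx1 : x < 1 := hx
  have hdist : 1 - x < min 1 (Real.sqrt (ε / (2*(S+1)))) := by
    rw [Real.dist_eq, abs_of_neg (by linarith : x - 1 < 0)] at hd
    linarith
  have hx0 : 0 ≤ x := by
    have := lt_of_lt_of_le hdist (min_le_left _ _)
    linarith
  have hsq : (1-x)^2 < ε / (2*(S+1)) := by
    have h2 := lt_of_lt_of_le hdist (min_le_right _ _)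
    have h3 : (0:ℝ) ≤ 1 - x := by linarith
    calc (1-x)^2 < (Real.sqrt (ε / (2*(S+1))))^2 := by
          apply sq_lt_sq' _ h2; linarith [Real.sqrt_nonneg (ε / (2*(S+1)))]
      _ = ε / (2*(S+1)) := Real.sq_sqrt (by positivity)
  -- sums
  have hT := hasSum_aux hx0 hx1
  have hTsum : Summable (fun n : ℕ => ((n:ℝ)+1) * x ^ n) := hT.summable
  have hterm_le : ∀ n : ℕ, ((n:ℝ)+1) * R n * x ^ n ≤ ((n:ℝ)+1) * x ^ n := by
    intro n
    have : ((n:ℝ)+1) * R n ≤ ((n:ℝ)+1) * 1 := by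
      apply mul_le_mul_of_nonneg_left (h1 n) (by positivity)
    nlinarith [pow_nonneg hx0 n]
  have hterm_nn : ∀ n : ℕ, 0 ≤ ((n:ℝ)+1) * R n * x ^ n := by
    intro n
    have := h0 n
    positivity
  have hUsum : Summable (fun n : ℕ => ((n:ℝ)+1) * R n * x ^ n) :=
    Summable.of_nonneg_of_le hterm_nn hterm_le hTsum
  set u : ℝ := ∑' n : ℕ, ((n:ℝ)+1) * R n * x ^ n with hu
  have hT1 : (1-x)^2 * (((1-x)^2)⁻¹) = 1 := by
    have : (1-x) ≠ 0 := by intro h; nlinarith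
    field_simp
  have huT : u ≤ ((1-x)^2)⁻¹ := by
    rw [← hT.tsum_eq]
    exact Summable.tsum_le_tsum hterm_le hUsum hTsum
  have hu0 : 0 ≤ u := tsum_nonneg hterm_nn
  -- error term
  have herr : ((1-x)^2)⁻¹ - u = ∑' n : ℕ, (((n:ℝ)+1) * x ^ n - ((n:ℝ)+1) * R n * x ^ n) := by
    rw [Summable.tsum_sub hTsum hUsum, hT.tsum_eq]
  -- bound the error tsum
  set g : ℕ → ℝ := fun n => ((n:ℝ)+1) * x ^ n - ((n:ℝ)+1) * R n * x ^ n with hg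
  have hgsum : Summable g := hTsum.sub hUsum
  set h1f : ℕ → ℝ := fun n => if n < N then ((n:ℝ)+1) else 0 with hh1
  set h2f : ℕ → ℝ := fun n => (ε/4) * (((n:ℝ)+1) * x ^ n) with hh2
  have hh1sum : Summable h1f := by
    apply summable_of_ne_finset_zero (s := Finset.range N)
    intro n hn
    simp only [hh1]
    rw [if_neg]
    simpa using hn
  have hh2sum : Summable h2f := hTsum.mul_left _
  have hgle : ∀ n, g n ≤ h1f n + h2f n := by
    intro n
    simp only [hg, hh1, hh2]
    by_cases hn : n < N
    · rw [if_pos hn]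
      have p1 : ((n:ℝ)+1) * R n * x ^ n ≥ 0 := hterm_nn n
      have p2 : ((n:ℝ)+1) * x ^ n ≤ ((n:ℝ)+1) := by
        have : x ^ n ≤ 1 := pow_le_one₀ hx0 (le_of_lt hx1)
        nlinarith [pow_nonneg hx0 n]
      have p3 : 0 ≤ (ε/4) * (((n:ℝ)+1) * x ^ n) := by positivity
      linarith
    · rw [if_neg hn]
      push_neg at hn
      have hd := hN n hn
      rw [Real.dist_eq] at hd
      have : 1 - R n ≤ ε/4 := by
        rcases abs_lt.1 hd with ⟨hl, hr⟩
        linarith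
      have hxn : (0:ℝ) ≤ x ^ n := pow_nonneg hx0 n
      have hn1 : (0:ℝ) ≤ (n:ℝ)+1 := by positivity
      calc ((n:ℝ)+1) * x ^ n - ((n:ℝ)+1) * R n * x ^ n
          = ((n:ℝ)+1) * x ^ n * (1 - R n) := by ring
        _ ≤ ((n:ℝ)+1) * x ^ n * (ε/4) := by
            apply mul_le_mul_of_nonneg_left this (by positivity)
        _ = 0 + (ε/4) * (((n:ℝ)+1) * x ^ n) := by ring
  have hgbound : ∑' n, g n ≤ S + (ε/4) * (((1-x)^2)⁻¹) := by
    have step1 : ∑' n, g n ≤ ∑' n, (h1f n + h2f n) :=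
      Summable.tsum_le_tsum hgle hgsum (hh1sum.add hh2sum)
    have step2 : ∑' n, (h1f n + h2f n) = (∑' n, h1f n) + ∑' n, h2f n :=
      Summable.tsum_add hh1sum hh2sum
    have step3 : ∑' n, h1f n = S := by
      rw [tsum_eq_sum (s := Finset.range N)]
      · apply Finset.sum_congr rfl
        intro n hn
        simp only [hh1]
        rw [if_pos (Finset.mem_range.1 hn)]
      · intro n hn
        simp only [hh1]
        rw [if_neg]
        simpa using hn
    have step4 : ∑' n, h2f n = (ε/4) * (((1-x)^2)⁻¹) := by
      rw [tsum_mul_left, hT.tsum_eq]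
    linarith
  -- final estimate
  have hfinal : dist ((1-x)^2 * u) 1 < ε := by
    rw [Real.dist_eq]
    have hsq0 : (0:ℝ) ≤ (1-x)^2 := sq_nonneg _
    have hle1 : (1-x)^2 * u ≤ 1 := by
      calc (1-x)^2 * u ≤ (1-x)^2 * (((1-x)^2)⁻¹) := by
            apply mul_le_mul_of_nonneg_left huT hsq0
        _ = 1 := hT1
    have habs : |(1-x)^2 * u - 1| = 1 - (1-x)^2 * u := by
      rw [abs_of_nonpos (by linarith)]; ring
    rw [habs]
    have key : 1 - (1-x)^2 * u = (1-x)^2 * ((((1-x)^2)⁻¹) - u) := by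
      rw [mul_sub, hT1]
    rw [key, herr]
    calc (1-x)^2 * (∑' n, g n) ≤ (1-x)^2 * (S + (ε/4) * (((1-x)^2)⁻¹)) := by
          apply mul_le_mul_of_nonneg_left hgbound hsq0
      _ = (1-x)^2 * S + (ε/4) * ((1-x)^2 * (((1-x)^2)⁻¹)) := by ring
      _ = (1-x)^2 * S + ε/4 := by rw [hT1]; ring
      _ ≤ (ε / (2*(S+1))) * S + ε/4 := by
          have := mul_le_mul_of_nonneg_right (le_of_lt hsq) hSpos
          linarith
      _ < ε := by
          have hfrac : (ε / (2*(S+1))) * S < ε/2 := by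
            rw [div_mul_eq_mul_div, div_lt_iff₀ (by positivity)]
            nlinarith
          linarith
  exact hfinal

lemma factor_lim (k c : ℝ) (hk : 0 ≤ k) (hc : 0 < c) :
    Tendsto (fun n : ℕ => ((n:ℝ)+c)/((n:ℝ)+k+c)) atTop (𝓝 1) := by
  have hden : Tendsto (fun n : ℕ => (n:ℝ)+k+c) atTop atTop := by
    have h2 := tendsto_atTop_add_const_right atTop (k+c)
      (tendsto_natCast_atTop_atTop (R := ℝ))
    refine h2.congr ?_
    intro n; ring
  have hz : Tendsto (fun n : ℕ => k/((n:ℝ)+k+c)) atTop (𝓝 0) :=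
    tendsto_const_nhds.div_atTop hden
  have heq : ∀ n : ℕ, ((n:ℝ)+c)/((n:ℝ)+k+c) = 1 - k/((n:ℝ)+k+c) := by
    intro n
    have hd : ((n:ℝ)+k+c) ≠ 0 := by positivity
    field_simp
    ring
  have h1 : Tendsto (fun _ : ℕ => (1:ℝ)) atTop (𝓝 1) := tendsto_const_nhds
  have h2 := h1.sub hz
  simp only [sub_zero] at h2
  exact h2.congr fun n => (heq n).symm

lemma R_lim (k j : ℕ) :
    Tendsto (fun n : ℕ => rf ((n:ℝ)+2) j / rf ((n:ℝ)+(k:ℝ)+2) j) atTop (𝓝 1) := by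
  have hrw : ∀ n : ℕ, rf ((n:ℝ)+2) j / rf ((n:ℝ)+(k:ℝ)+2) j
      = ∏ i ∈ Finset.range j, (((n:ℝ)+2+(i:ℝ))/((n:ℝ)+(k:ℝ)+2+(i:ℝ))) := by
    intro n
    rw [Finset.prod_div_distrib]
    rfl
  have hprod : Tendsto
      (fun n : ℕ => ∏ i ∈ Finset.range j, (((n:ℝ)+2+(i:ℝ))/((n:ℝ)+(k:ℝ)+2+(i:ℝ))))
      atTop (𝓝 (∏ _i ∈ Finset.range j, (1:ℝ))) := by
    apply tendsto_finset_prod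
    intro i _
    have := factor_lim (k:ℝ) (2+(i:ℝ)) (by positivity) (by positivity)
    refine this.congr ?_
    intro n
    congr 1 <;> ring
  rw [Finset.prod_const_one] at hprod
  exact hprod.congr fun n => (hrw n).symm

theorem stmt_19 (k j : ℕ) (hj : j ≤ k) :
    (∀ x : ℝ, |x| < 1 →
        ∑' l : ℕ, rf ((l : ℝ) + 2) j * rf 2 l / (rf ((l : ℝ) + k + 2) j * l.factorial) * x ^ l
          = ((j + 1).factorial : ℝ) * ((k + 1).factorial : ℝ) / ((j + k + 1).factorial : ℝ)
              * F21 ((k : ℝ) + 2) ((j : ℝ) + 2) ((k : ℝ) + (j : ℝ) + 2) x) ∧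
    Tendsto (fun x : ℝ => (1 - x) ^ 2 * F21 ((k : ℝ) + 2) ((j : ℝ) + 2) ((k : ℝ) + (j : ℝ) + 2) x)
      (nhdsWithin 1 (Set.Iio 1))
      (nhds (((j + k + 1).factorial : ℝ) / (((j + 1).factorial : ℝ) * ((k + 1).factorial : ℝ)))) := by
  constructor
  · intro x hx
    simp only [F21]
    rw [← tsum_mul_left]
    refine tsum_congr fun l => ?_
    rw [key_id k j l]
    set b := rf ((l:ℝ)+2) j * rf 2 l / (rf ((l:ℝ)+(k:ℝ)+2) j * l.factorial) with hb
    have hCG : (((j+1).factorial:ℝ) * ((k+1).factorial:ℝ) / ((j+k+1).factorial:ℝ)) *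
        (((j+k+1).factorial:ℝ) / (((j+1).factorial:ℝ) * ((k+1).factorial:ℝ))) = 1 := by
      have n1 := fact_nz (j+1); have n2 := fact_nz (k+1); have n3 := fact_nz (j+k+1)
      field_simp
    linear_combination (-(b * x^l)) * hCG
  · have h0 : ∀ n : ℕ, 0 ≤ rf ((n:ℝ)+2) j / rf ((n:ℝ)+(k:ℝ)+2) j := fun n =>
      div_nonneg (rf_pos (by positivity) j).le (rf_pos (by positivity) j).le
    have h1 : ∀ n : ℕ, rf ((n:ℝ)+2) j / rf ((n:ℝ)+(k:ℝ)+2) j ≤ 1 := by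
      intro n
      rw [div_le_one (rf_pos (by positivity) j)]
      apply Finset.prod_le_prod
      · intro i _
        positivity
      · intro i _
        have : (0:ℝ) ≤ (k:ℝ) := by positivity
        linarith
    have habel := abel_aux (fun n => rf ((n:ℝ)+2) j / rf ((n:ℝ)+(k:ℝ)+2) j) h0 h1 (R_lim k j)
    have hfun : ∀ x : ℝ, (1-x)^2 * F21 ((k:ℝ)+2) ((j:ℝ)+2) ((k:ℝ)+(j:ℝ)+2) x
        = (((j+k+1).factorial:ℝ)/(((j+1).factorial:ℝ)*((k+1).factorial:ℝ)))
          * ((1-x)^2 * ∑' n : ℕ, ((n:ℝ)+1) * (rf ((n:ℝ)+2) j / rf ((n:ℝ)+(k:ℝ)+2) j) * x^n) := by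
      intro x
      simp only [F21]
      have hsum : (∑' i : ℕ, rf ((k:ℝ)+2) i * rf ((j:ℝ)+2) i / (rf ((k:ℝ)+(j:ℝ)+2) i * i.factorial) * x ^ i)
          = ∑' i : ℕ, (((j+k+1).factorial:ℝ)/(((j+1).factorial:ℝ)*((k+1).factorial:ℝ)))
              * (((i:ℝ)+1) * (rf ((i:ℝ)+2) j / rf ((i:ℝ)+(k:ℝ)+2) j) * x^i) := by
        refine tsum_congr fun i => ?_
        rw [key_id k j i, termb_eq k j i]
        ring
      rw [hsum, tsum_mul_left]
      ring
    have hG := habel.const_mul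
      (((j+k+1).factorial:ℝ)/(((j+1).factorial:ℝ)*((k+1).factorial:ℝ)))
    rw [mul_one] at hG
    exact hG.congr fun x => (hfun x).symm
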